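/- Proof template, uniform pricing: let λ > 0 and μ ≥ 0, fix a strategy space S_i for each bidder (either all non-increasing bid vectors or all uniform bid vectors), and suppose that for every valuation profile (v_1,…,v_n) with v_i ∈ V_i, every bidder i, and every finitely supported probability distribution P_{−i} over profiles b_{−i} of bids from the strategy spaces satisfying no-overbidding, there exists a bid vector b'_i ∈ S_i satisfying no-overbidding w.r.t. v_i such that E_{b_{−i}∼P_{−i}}[u_i^{v_i}(b'_i, b_{−i})] ≥ λ·v_i(x_i^v) − μ·E_{b_{−i}∼P_{−i}}[Σ_{j=1}^{x_i^v} β_j(b_{−i})]. Then under uniform pricing, for every finite product prior π and every Bayes-Nash equilibrium B whose strategies place all mass on no-overbidding bid vectors, E_{v∼π}[SW(v, x^v)] ≤ ((μ+1)/λ) · E_{v∼π} E_{b∼B^v}[SW(v, x(b))]. -/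

import Mathlib

open Finset MeasureTheory

noncomputable section

/-- A bid vector for an auction of `k` units: entry `j` is the `(j+1)`-st marginal bid. -/
abbrev Bid (k : ℕ) := Fin k → ℝ

/-- Standard bid vectors: non-increasing and non-negative. -/
def StdBid {k : ℕ} (b : Bid k) : Prop :=
  (∀ j j' : Fin k, j ≤ j' → b j' ≤ b j) ∧ ∀ j, 0 ≤ b j

/-- Uniform bid vectors: a common value `c ≥ 0` on the first `q ≤ k` entries, `0` afterwards. -/
def UnifBid {k : ℕ} (b : Bid k) : Prop :=
  ∃ c : ℝ, 0 ≤ c ∧ ∃ q : ℕ, q ≤ k ∧ ∀ j : Fin k, b j = if (j : ℕ) < q then c else 0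

/-- A valuation on `{0,…,k}`: zero at `0`, non-negative and non-decreasing (up to `k`). -/
def IsValuation (k : ℕ) (v : ℕ → ℝ) : Prop :=
  v 0 = 0 ∧ (∀ x, 0 ≤ v x) ∧ ∀ x y : ℕ, x ≤ y → y ≤ k → v x ≤ v y

/-- Submodularity: non-increasing marginal values `v j - v (j-1)`. -/
def SubmodularVal (k : ℕ) (v : ℕ → ℝ) : Prop :=
  ∀ x y : ℕ, 1 ≤ x → x < y → y ≤ k → v y - v (y - 1) ≤ v x - v (x - 1)

/-- Subadditivity. -/
def SubadditiveVal (k : ℕ) (v : ℕ → ℝ) : Prop :=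
  ∀ x y : ℕ, x + y ≤ k → v (x + y) ≤ v x + v y

/-- `x` is a valid allocation for the bidding profile `b`:
all `k` units are allocated, and every winning bid is at least every losing bid. -/
def ValidAlloc {n k : ℕ} (b : Fin n → Bid k) (x : Fin n → ℕ) : Prop :=
  (∑ i, x i) = k ∧
  ∀ i i' : Fin n, ∀ j j' : Fin k, (j : ℕ) < x i → x i' ≤ (j' : ℕ) → b i' j' ≤ b i j

/-- The sum of the first `x` entries of a bid vector. -/
def winSum {k : ℕ} (b : Bid k) (x : ℕ) : ℝ :=
  ∑ j : Fin k, if (j : ℕ) < x then b j else 0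

/-- No-overbidding of the bid vector `b` with respect to the valuation `v`. -/
def NoOverbid {k : ℕ} (v : ℕ → ℝ) (b : Bid k) : Prop :=
  ∀ s : ℕ, 1 ≤ s → s ≤ k → winSum b s ≤ v s

/-- The `j`-th highest element of a multiset of reals (`j` is 1-indexed; default `0`). -/
def kthHighest (s : Multiset ℝ) (j : ℕ) : ℝ :=
  ((s.sort (· ≤ ·)).reverse).getD (j - 1) 0

/-- The multiset of all bids submitted under the profile `b`. -/
def allBids {n k : ℕ} (b : Fin n → Bid k) : Multiset ℝ :=
  (Finset.univ : Finset (Fin n × Fin k)).val.map fun p => b p.1 p.2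

/-- The multiset of all bids submitted by the bidders other than `i`. -/
def othersBids {n k : ℕ} (b : Fin n → Bid k) (i : Fin n) : Multiset ℝ :=
  ((Finset.univ : Finset (Fin n × Fin k)).filter (fun p => p.1 ≠ i)).val.map
    fun p => b p.1 p.2

/-- `β_j` (1-indexed): the `j`-th lowest among the `k` highest elements of `s`,
i.e. the `(k+1-j)`-th highest element of `s`. -/
def betaBid (k : ℕ) (s : Multiset ℝ) (j : ℕ) : ℝ := kthHighest s (k + 1 - j)

/-- `∑_{j=1}^{x} β_j(s)`. -/
def betaSum (k : ℕ) (s : Multiset ℝ) (x : ℕ) : ℝ := ∑ j ∈ Finset.Icc 1 x, betaBid k s j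

/-- The uniform price: the `(k+1)`-st highest of all submitted bids (`0` by default). -/
def price {n k : ℕ} (b : Fin n → Bid k) : ℝ := kthHighest (allBids b) (k + 1)

/-- Discriminatory-pricing utility of bidder `i` under the allocation rule `X`. -/
def uDisc {n k : ℕ} (X : (Fin n → Bid k) → Fin n → ℕ) (v : ℕ → ℝ) (i : Fin n)
    (b : Fin n → Bid k) : ℝ :=
  v (X b i) - winSum (b i) (X b i)

/-- Uniform-pricing utility of bidder `i` under the allocation rule `X`. -/
def uUnif {n k : ℕ} (X : (Fin n → Bid k) → Fin n → ℕ) (v : ℕ → ℝ) (i : Fin n)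
    (b : Fin n → Bid k) : ℝ :=
  v (X b i) - (X b i : ℝ) * price b

/-- The `x`-th entry (1-indexed) of a bid vector, with the convention that it is `0`
for `x = 0` (or `x > k`). -/
def lastWinBid {k : ℕ} (b : Bid k) (x : ℕ) : ℝ :=
  if h : 1 ≤ x ∧ x ≤ k then b ⟨x - 1, by omega⟩ else 0

/-- Social welfare of the allocation `x` under the valuation profile `v`. -/
def SW {n : ℕ} (v : Fin n → ℕ → ℝ) (x : Fin n → ℕ) : ℝ := ∑ i, v i (x i)

namespace S7

/-- descending sort of a multiset -/
def sdesc (s : Multiset ℝ) : List ℝ := (s.sort (· ≤ ·)).reverse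

lemma sdesc_sorted (s : Multiset ℝ) : (sdesc s).Pairwise (fun a b => b ≤ a) := by
  have h := Multiset.pairwise_sort s (· ≤ ·)
  simpa [sdesc, List.pairwise_reverse] using h

lemma sdesc_coe (s : Multiset ℝ) : ((sdesc s : List ℝ) : Multiset ℝ) = s := by
  simp [sdesc, Multiset.sort_eq]

lemma sdesc_length (s : Multiset ℝ) : (sdesc s).length = Multiset.card s := by
  simp [sdesc]

lemma mem_sdesc {s : Multiset ℝ} {x : ℝ} : x ∈ sdesc s ↔ x ∈ s := by
  simp [sdesc, Multiset.mem_sort]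

instance : IsRefl ℝ (fun a b => b ≤ a) := ⟨fun a => le_refl a⟩

section sortedlist
variable {l : List ℝ}

lemma sorted_getElem_le (hl : l.Pairwise (fun a b => b ≤ a)) {i j : ℕ} (hi : i ≤ j) (hj : j < l.length) :
    l[j] ≤ l[i]'(lt_of_le_of_lt hi hj) := by
  have := List.Pairwise.rel_get_of_le hl (a := ⟨i, lt_of_le_of_lt hi hj⟩) (b := ⟨j, hj⟩) hi
  simpa using this

/-- count upper bound -/
lemma cnt_le {p : ℝ → Bool} {m : ℕ}
    (hp : ∀ j (h : j < l.length), m ≤ j → ¬ p l[j]) : l.countP p ≤ m := by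
  have hsplit : l.countP p = (l.take m).countP p + (l.drop m).countP p := by
    rw [← List.countP_append, List.take_append_drop]
  have h1 : (l.take m).countP p ≤ m :=
    le_trans (List.countP_le_length (p := p)) (by simp)
  have h2 : (l.drop m).countP p = 0 := by
    rw [List.countP_eq_zero]
    intro x hx
    rw [List.mem_iff_getElem] at hx
    obtain ⟨j, hj, rfl⟩ := hx
    rw [List.getElem_drop]
    exact hp _ (by simp at hj; omega) (by omega)
  omega

/-- count lower bound -/
lemma cnt_ge {p : ℝ → Bool} {m : ℕ} (hm : m ≤ l.length)
    (hp : ∀ j (h : j < l.length), j < m → p l[j]) : m ≤ l.countP p := by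
  have hsplit : l.countP p = (l.take m).countP p + (l.drop m).countP p := by
    rw [← List.countP_append, List.take_append_drop]
  have h1 : (l.take m).countP p = m := by
    rw [List.countP_eq_length.2, List.length_take]; · omega
    intro x hx
    rw [List.mem_iff_getElem] at hx
    obtain ⟨j, hj, rfl⟩ := hx
    rw [List.getElem_take]
    exact hp _ (by simp at hj; omega) (by simp at hj; omega)
  omega

end sortedlist

end S7

namespace S7b
open S7

lemma getD_nonneg {s : Multiset ℝ} (h0 : ∀ x ∈ s, 0 ≤ x) (m : ℕ) :
    0 ≤ (sdesc s).getD m 0 := by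
  by_cases hm : m < (sdesc s).length
  · rw [List.getD_eq_getElem _ _ hm]
    exact h0 _ (mem_sdesc.1 (List.getElem_mem hm))
  · rw [List.getD_eq_default _ _ (by omega)]

lemma getD_anti {s : Multiset ℝ} (h0 : ∀ x ∈ s, 0 ≤ x) {m m' : ℕ} (h : m ≤ m') :
    (sdesc s).getD m' 0 ≤ (sdesc s).getD m 0 := by
  by_cases hm' : m' < (sdesc s).length
  · rw [List.getD_eq_getElem _ _ hm', List.getD_eq_getElem _ _ (lt_of_le_of_lt h hm')]
    exact sorted_getElem_le (sdesc_sorted s) h hm'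
  · rw [List.getD_eq_default _ _ (by omega)]
    exact getD_nonneg h0 m

lemma countP_sdesc (s : Multiset ℝ) (p : ℝ → Bool) :
    (sdesc s).countP p = Multiset.countP (fun x => p x = true) s := by
  rw [← sdesc_coe s, Multiset.coe_countP, sdesc_coe]
  congr 1
  funext b
  simp

/-- monotonicity of the m-th highest under submultiset -/
lemma getD_mono_mset {s t : Multiset ℝ} (hst : s ≤ t) (h0 : ∀ x ∈ t, 0 ≤ x) (m : ℕ) :
    (sdesc s).getD m 0 ≤ (sdesc t).getD m 0 := by
  by_cases hm : m < (sdesc s).length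
  · set c : ℝ := (sdesc s)[m] with hc
    rw [List.getD_eq_getElem _ _ hm]
    have hcnt_s : m + 1 ≤ (sdesc s).countP (fun x => decide (c ≤ x)) := by
      apply cnt_ge (by omega)
      intro j hj hjm
      simpa using sorted_getElem_le (sdesc_sorted s) (by omega : j ≤ m) hm
    have hcnt_t : m + 1 ≤ (sdesc t).countP (fun x => decide (c ≤ x)) := by
      rw [countP_sdesc] at hcnt_s ⊢
      calc m + 1 ≤ _ := hcnt_s
        _ ≤ _ := Multiset.countP_le_of_le _ hst
    -- deduce bound on t side
    have hmt : m < (sdesc t).length := by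
      rw [sdesc_length] at hm ⊢
      exact lt_of_lt_of_le hm (Multiset.card_le_card hst)
    rw [List.getD_eq_getElem _ _ hmt]
    by_contra hlt
    push_neg at hlt
    have : (sdesc t).countP (fun x => decide (c ≤ x)) ≤ m := by
      apply cnt_le
      intro j hj hjm
      have := sorted_getElem_le (sdesc_sorted t) hjm hj
      simp only [decide_eq_true_eq]
      exact not_le.2 (lt_of_le_of_lt this hlt)
    omega
  · rw [List.getD_eq_default _ _ (by omega)]
    exact getD_nonneg h0 m

lemma sum_getD_range (l : List ℝ) :
    ∑ m ∈ Finset.range l.length, l.getD m 0 = l.sum := by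
  induction l using List.reverseRecOn with
  | nil => simp
  | append_singleton xs x ih =>
    rw [List.length_append, List.sum_append]
    simp only [List.length_singleton, List.sum_singleton]
    rw [Finset.sum_range_succ, ← ih]
    congr 1
    · apply Finset.sum_congr rfl
      intro m hm
      simp only [Finset.mem_range] at hm
      rw [List.getD_eq_getElem _ _ (by simp; omega), List.getD_eq_getElem _ _ (by omega),
        List.getElem_append_left]
    · rw [List.getD_eq_getElem _ _ (by simp)]
      rw [List.getElem_append_right (by omega)]
      simp

/-- top-k sum is at most the total of a dominating sub-multiset of size k -/
lemma topk_le_dom (W L : Multiset ℝ) (k : ℕ) (hW : Multiset.card W = k)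
    (hdom : ∀ w ∈ W, ∀ x ∈ L, x ≤ w) :
    ∑ m ∈ Finset.range k, (sdesc (W + L)).getD m 0 ≤ W.sum := by
  have hWlen : (sdesc W).length = k := by rw [sdesc_length, hW]
  have key : ∀ m < k, (sdesc (W + L)).getD m 0 ≤ (sdesc W).getD m 0 := by
    intro m hmk
    have hm : m < (sdesc W).length := by omega
    set c : ℝ := (sdesc W)[m] with hc
    have hcW : c ∈ W := mem_sdesc.1 (List.getElem_mem hm)
    have hcntW : (sdesc W).countP (fun x => decide (c < x)) ≤ m := by
      apply cnt_le
      intro j hj hjm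
      have := sorted_getElem_le (sdesc_sorted W) hjm hj
      simp only [decide_eq_true_eq]
      push_neg
      exact this
    have hcntL : Multiset.countP (fun x => decide (c < x) = true) L = 0 := by
      rw [Multiset.countP_eq_zero]
      intro x hx
      simp only [decide_eq_true_eq]
      push_neg
      exact hdom c hcW x hx
    have hcntWL : (sdesc (W + L)).countP (fun x => decide (c < x)) ≤ m := by
      rw [countP_sdesc, Multiset.countP_add]
      rw [countP_sdesc] at hcntW
      omega
    have hmWL : m < (sdesc (W + L)).length := by
      rw [sdesc_length, Multiset.card_add]; omega
    rw [List.getD_eq_getElem _ _ hmWL, List.getD_eq_getElem _ _ hm]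
    by_contra hlt
    push_neg at hlt
    have : m + 1 ≤ (sdesc (W + L)).countP (fun x => decide (c < x)) := by
      apply cnt_ge (by omega)
      intro j hj hjm
      have := sorted_getElem_le (sdesc_sorted (W + L)) (by omega : j ≤ m) hmWL
      simp only [decide_eq_true_eq]
      exact lt_of_lt_of_le hlt this
    omega
  calc ∑ m ∈ Finset.range k, (sdesc (W + L)).getD m 0
      ≤ ∑ m ∈ Finset.range k, (sdesc W).getD m 0 := by
        apply Finset.sum_le_sum; intro m hm
        exact key m (Finset.mem_range.1 hm)
    _ = (sdesc W).sum := by rw [← hWlen, sum_getD_range]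
    _ = W.sum := by rw [← sdesc_coe W, Multiset.sum_coe, sdesc_coe]

end S7b


namespace S7c
open S7 S7b

lemma icc_range (f : ℕ → ℝ) (k x : ℕ) :
    ∑ j ∈ Finset.Icc 1 x, f (k - j) = ∑ j ∈ Finset.range x, f (k - 1 - j) := by
  induction x with
  | zero => simp
  | succ x ih =>
    rw [Finset.sum_Icc_succ_top (by omega), Finset.sum_range_succ, ih]
    congr 1
    congr 1
    omega

lemma pack_superadd (f : ℕ → ℝ) (hf : ∀ a b : ℕ, a ≤ b → f b ≤ f a) (k : ℕ)
    (a b : ℕ) :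
    (∑ j ∈ Finset.range a, f (k - 1 - j)) + ∑ j ∈ Finset.range b, f (k - 1 - j)
      ≤ ∑ j ∈ Finset.range (a + b), f (k - 1 - j) := by
  induction b with
  | zero => simp
  | succ b ih =>
    rw [Finset.sum_range_succ, show a + (b+1) = (a+b)+1 by omega, Finset.sum_range_succ]
    have : f (k - 1 - b) ≤ f (k - 1 - (a + b)) := hf _ _ (by omega)
    linarith

lemma pack {ι : Type*} (s : Finset ι) (x : ι → ℕ) (f : ℕ → ℝ)
    (hf : ∀ a b : ℕ, a ≤ b → f b ≤ f a) (hf0 : ∀ m, 0 ≤ f m) (k : ℕ) :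
    ∑ i ∈ s, ∑ j ∈ Finset.range (x i), f (k - 1 - j)
      ≤ ∑ j ∈ Finset.range (∑ i ∈ s, x i), f (k - 1 - j) := by
  induction s using Finset.cons_induction with
  | empty => simp
  | cons i s his ih =>
    rw [Finset.sum_cons, Finset.sum_cons]
    calc _ ≤ (∑ j ∈ Finset.range (x i), f (k-1-j))
            + ∑ j ∈ Finset.range (∑ i ∈ s, x i), f (k-1-j) := by linarith
      _ ≤ _ := pack_superadd f hf k _ _

lemma othersBids_congr {n k : ℕ} {b b' : Fin n → Bid k} (i : Fin n)
    (h : ∀ j, j ≠ i → b j = b' j) : othersBids b i = othersBids b' i := by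
  unfold othersBids
  apply Multiset.map_congr rfl
  intro p hp
  rw [Finset.mem_val, Finset.mem_filter] at hp
  rw [h p.1 hp.2]

lemma othersBids_le_allBids {n k : ℕ} (b : Fin n → Bid k) (i : Fin n) :
    othersBids b i ≤ allBids b := by
  unfold othersBids allBids
  apply Multiset.map_le_map
  rw [Finset.filter_val]
  exact Multiset.filter_le _ _

lemma mem_allBids_nonneg {n k : ℕ} {b : Fin n → Bid k} (hb0 : ∀ i j, 0 ≤ b i j) :
    ∀ x ∈ allBids b, (0:ℝ) ≤ x := by
  intro x hx
  unfold allBids at hx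
  rw [Multiset.mem_map] at hx
  obtain ⟨p, _, rfl⟩ := hx
  exact hb0 _ _

lemma price_nonneg {n k : ℕ} {b : Fin n → Bid k} (hb0 : ∀ i j, 0 ≤ b i j) :
    0 ≤ price b :=
  getD_nonneg (mem_allBids_nonneg hb0) _

/-- main chain: sum of beta-sums is at most realized welfare -/
lemma chainMain {n k : ℕ} (b : Fin n → Bid k) (x y : Fin n → ℕ) (v : Fin n → ℕ → ℝ)
    (hb0 : ∀ i j, 0 ≤ b i j) (hva : ValidAlloc b x) (hvval : ∀ i, IsValuation k (v i))
    (hnob : ∀ i, NoOverbid (v i) (b i)) (hy : ∑ i, y i = k) :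
    ∑ i, betaSum k (othersBids b i) (y i) ≤ ∑ i, v i (x i) := by
  classical
  set f : ℕ → ℝ := fun m => (sdesc (allBids b)).getD m 0 with hfdef
  have hall0 := mem_allBids_nonneg hb0
  have hf : ∀ a b : ℕ, a ≤ b → f b ≤ f a := fun a b hab => getD_anti hall0 hab
  have hf0 : ∀ m, 0 ≤ f m := fun m => getD_nonneg hall0 m
  have hyle : ∀ i, y i ≤ k := by
    intro i; rw [← hy]
    exact Finset.single_le_sum (fun j _ => Nat.zero_le _) (Finset.mem_univ i)
  -- step 1+2
  have step1 : ∀ i, betaSum k (othersBids b i) (y i)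
      ≤ ∑ j ∈ Finset.range (y i), f (k - 1 - j) := by
    intro i
    rw [← icc_range]
    unfold betaSum betaBid kthHighest
    apply Finset.sum_le_sum
    intro j hj
    rw [Finset.mem_Icc] at hj
    have hj1 : (k + 1 - j) - 1 = k - j := by have := hyle i; omega
    rw [hj1]
    exact getD_mono_mset (othersBids_le_allBids b i) hall0 _
  -- combine with packing
  have step3 : ∑ i, ∑ j ∈ Finset.range (y i), f (k - 1 - j)
      ≤ ∑ m ∈ Finset.range k, f m := by
    calc _ ≤ ∑ j ∈ Finset.range (∑ i, y i), f (k - 1 - j) :=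
          pack Finset.univ y f hf hf0 k
      _ = ∑ j ∈ Finset.range k, f (k - 1 - j) := by rw [hy]
      _ = _ := Finset.sum_range_reflect f k
  -- winners multiset
  set W : Multiset ℝ := ((Finset.univ : Finset (Fin n × Fin k)).filter
      (fun p => (p.2 : ℕ) < x p.1)).val.map (fun p => b p.1 p.2) with hWdef
  set L : Multiset ℝ := ((Finset.univ : Finset (Fin n × Fin k)).filter
      (fun p => ¬ (p.2 : ℕ) < x p.1)).val.map (fun p => b p.1 p.2) with hLdef
  have hWL : allBids b = W + L := by
    rw [hWdef, hLdef, ← Multiset.map_add]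
    unfold allBids
    congr 1
    rw [Finset.filter_val, Finset.filter_val]
    exact (Multiset.filter_add_not _ _).symm
  have hxle : ∀ i, x i ≤ k := by
    intro i; rw [← hva.1]
    exact Finset.single_le_sum (fun j _ => Nat.zero_le _) (Finset.mem_univ i)
  have hcardW : Multiset.card W = k := by
    rw [hWdef, Multiset.card_map, ← Finset.card_def]
    rw [Finset.card_filter]
    rw [Fintype.sum_prod_type]
    have : ∀ i : Fin n, ∑ j : Fin k, (if (j:ℕ) < x i then 1 else 0) = x i := by
      intro i
      rw [Fin.sum_univ_eq_sum_range (fun j => if j < x i then 1 else 0) k]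
      rw [Finset.sum_boole]
      have : (Finset.range k).filter (fun j => j < x i) = Finset.range (x i) := by
        ext j; simp only [Finset.mem_filter, Finset.mem_range]
        constructor
        · rintro ⟨_, h⟩; exact h
        · intro h; exact ⟨lt_of_lt_of_le h (hxle i), h⟩
      rw [this]; simp
    rw [Finset.sum_congr rfl (fun i _ => this i), hva.1]
  have hdom : ∀ w ∈ W, ∀ z ∈ L, z ≤ w := by
    intro w hw z hz
    rw [hWdef, Multiset.mem_map] at hw
    obtain ⟨p, hp, rfl⟩ := hw
    rw [Finset.mem_val, Finset.mem_filter] at hp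
    rw [hLdef, Multiset.mem_map] at hz
    obtain ⟨p', hp', rfl⟩ := hz
    rw [Finset.mem_val, Finset.mem_filter] at hp'
    exact hva.2 p.1 p'.1 p.2 p'.2 hp.2 (by omega)
  have step5 : ∑ m ∈ Finset.range k, f m ≤ W.sum := by
    rw [hfdef, hWL]
    exact topk_le_dom W L k hcardW hdom
  have hWsum : W.sum = ∑ i, winSum (b i) (x i) := by
    rw [hWdef]
    rw [← Finset.sum_eq_multiset_sum]
    rw [Finset.sum_filter, Fintype.sum_prod_type]
    unfold winSum
    rfl
  have step6 : ∑ i, winSum (b i) (x i) ≤ ∑ i, v i (x i) := by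
    apply Finset.sum_le_sum
    intro i _
    rcases Nat.eq_zero_or_pos (x i) with h0 | hpos
    · rw [h0]
      have : winSum (b i) 0 = 0 := by
        unfold winSum; simp
      rw [this, (hvval i).1]
    · exact hnob i (x i) hpos (hxle i)
  calc ∑ i, betaSum k (othersBids b i) (y i)
      ≤ ∑ i, ∑ j ∈ Finset.range (y i), f (k - 1 - j) := Finset.sum_le_sum (fun i _ => step1 i)
    _ ≤ ∑ m ∈ Finset.range k, f m := step3
    _ ≤ W.sum := step5
    _ = ∑ i, winSum (b i) (x i) := hWsum
    _ ≤ ∑ i, v i (x i) := step6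

end S7c


namespace S7d

variable {ι : Type*} [Fintype ι] [DecidableEq ι] {β : ι → Type*} [∀ i, Fintype (β i)]

lemma glue_same (i : ι) (t : β i) (r : ∀ j : {j // j ≠ i}, β j) :
    (Equiv.piSplitAt i β).symm (t, r) i = t := by simp

lemma glue_ne (i : ι) {j : ι} (h : j ≠ i) (t : β i) (r : ∀ j : {j // j ≠ i}, β j) :
    (Equiv.piSplitAt i β).symm (t, r) j = r ⟨j, h⟩ := by simp [h]

lemma update_glue (i : ι) (t t' : β i) (r : ∀ j : {j // j ≠ i}, β j) :
    Function.update ((Equiv.piSplitAt i β).symm (t, r)) i t'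
      = (Equiv.piSplitAt i β).symm (t', r) := by
  funext j
  by_cases h : j = i
  · subst h; simp
  · rw [Function.update_of_ne h, glue_ne i h, glue_ne i h]

lemma prod_glue (i : ι) (q : ∀ j, β j → ℝ) (t : β i) (r : ∀ j : {j // j ≠ i}, β j) :
    ∏ j, q j ((Equiv.piSplitAt i β).symm (t, r) j)
      = q i t * ∏ j : {j // j ≠ i}, q j (r j) := by
  rw [← Finset.mul_prod_erase Finset.univ _ (Finset.mem_univ i)]
  congr 1
  · rw [glue_same]
  · rw [Finset.prod_subtype (Finset.univ.erase i) (p := fun j => j ≠ i)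
      (by intro x; simp) (fun x => q x ((Equiv.piSplitAt i β).symm (t, r) x))]
    apply Finset.prod_congr rfl
    intro j _
    rw [glue_ne i j.2]

lemma sum_split (i : ι) (f : (∀ j, β j) → ℝ) :
    ∑ θ : ∀ j, β j, f θ
      = ∑ t : β i, ∑ r : ∀ j : {j // j ≠ i}, β j, f ((Equiv.piSplitAt i β).symm (t, r)) := by
  rw [← Equiv.sum_comp (Equiv.piSplitAt i β).symm f, Fintype.sum_prod_type]

lemma sumPi (c : ∀ j, β j → ℝ) :
    ∑ θ : ∀ j, β j, ∏ j, c j (θ j) = ∏ j, ∑ b, c j b := by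
  rw [Finset.prod_univ_sum, Fintype.piFinset_univ]

lemma sumPi_one (c : ∀ j, β j → ℝ) (h1 : ∀ j, ∑ b, c j b = 1) :
    ∑ θ : ∀ j, β j, ∏ j, c j (θ j) = 1 := by
  rw [sumPi]
  rw [Finset.prod_congr rfl (fun j _ => h1 j), Finset.prod_const_one]

/-- marginalization: expectation of a function of coordinate `i` -/
lemma margin (pr : ∀ j, β j → ℝ) (h1 : ∀ j, ∑ t, pr j t = 1) (i : ι) (φ : β i → ℝ) :
    ∑ θ : ∀ j, β j, (∏ j, pr j (θ j)) * φ (θ i) = ∑ t, pr i t * φ t := by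
  rw [sum_split i]
  apply Finset.sum_congr rfl
  intro t _
  have : ∀ r : ∀ j : {j // j ≠ i}, β j,
      (∏ j, pr j ((Equiv.piSplitAt i β).symm (t, r) j)) * φ ((Equiv.piSplitAt i β).symm (t, r) i)
        = (∏ j : {j // j ≠ i}, pr j (r j)) * (pr i t * φ t) := by
    intro r
    rw [prod_glue, glue_same]; ring
  rw [Finset.sum_congr rfl (fun r _ => this r), ← Finset.sum_mul,
    sumPi_one (fun (j : {j // j ≠ i}) => pr j) (fun j => h1 j), one_mul]

/-- resample: substituting one coordinate and averaging out -/
lemma resample (pr : ∀ j, β j → ℝ) (h1 : ∀ j, ∑ t, pr j t = 1) (i : ι)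
    (Ψ : (∀ j, β j) → ℝ) :
    ∑ t, pr i t * ∑ σ : ∀ j, β j, (∏ j, pr j (σ j)) * Ψ (Function.update σ i t)
      = ∑ σ : ∀ j, β j, (∏ j, pr j (σ j)) * Ψ σ := by
  have inner : ∀ t : β i,
      ∑ σ : ∀ j, β j, (∏ j, pr j (σ j)) * Ψ (Function.update σ i t)
        = ∑ r : ∀ j : {j // j ≠ i}, β j, (∏ j : {j // j ≠ i}, pr j (r j))
            * Ψ ((Equiv.piSplitAt i β).symm (t, r)) := by
    intro t
    rw [sum_split i]
    have : ∀ s r, (∏ j, pr j ((Equiv.piSplitAt i β).symm (s, r) j))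
        * Ψ (Function.update ((Equiv.piSplitAt i β).symm (s, r)) i t)
        = pr i s * ((∏ j : {j // j ≠ i}, pr j (r j)) * Ψ ((Equiv.piSplitAt i β).symm (t, r))) := by
      intro s r
      rw [prod_glue, update_glue]; ring
    rw [Finset.sum_congr rfl (fun s _ => Finset.sum_congr rfl (fun r _ => this s r))]
    rw [Finset.sum_comm]
    apply Finset.sum_congr rfl
    intro r _
    rw [← Finset.sum_mul, h1 i, one_mul]
  simp only [inner]
  rw [sum_split i (fun σ => (∏ j, pr j (σ j)) * Ψ σ)]
  apply Finset.sum_congr rfl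
  intro t _
  rw [Finset.mul_sum]
  apply Finset.sum_congr rfl
  intro r _
  rw [prod_glue]; ring

/-- swapping the distribution of one coordinate under a function not depending on it -/
lemma oswap (w w' : ∀ j, β j → ℝ) (i : ι) (hww' : ∀ j, j ≠ i → w j = w' j)
    (h1 : ∑ o, w i o = 1) (h1' : ∑ o, w' i o = 1)
    (g : (∀ j, β j) → ℝ) (hg : ∀ ω o, g (Function.update ω i o) = g ω) :
    ∑ ω : ∀ j, β j, (∏ j, w j (ω j)) * g ω = ∑ ω : ∀ j, β j, (∏ j, w' j (ω j)) * g ω := by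
  rw [sum_split i, sum_split i (fun ω => (∏ j, w' j (ω j)) * g ω)]
  rw [Finset.sum_comm, Finset.sum_comm (γ := β i)]
  apply Finset.sum_congr rfl
  intro r _
  rcases isEmpty_or_nonempty (β i) with hE | hNE
  · rw [Finset.univ_eq_empty, Finset.sum_empty, Finset.sum_empty]
  · set o₀ : β i := Classical.arbitrary (β i) with ho₀
    have hgc : ∀ o : β i, g ((Equiv.piSplitAt i β).symm (o, r))
        = g ((Equiv.piSplitAt i β).symm (o₀, r)) := by
      intro o
      rw [← update_glue i o o₀ r, hg]
    have line : ∀ (u : ∀ j, β j → ℝ), (∀ o, u i o = w i o) → False ∨ True := by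
      intro _ _; right; trivial
    have expand : ∀ (u : ∀ j, β j → ℝ),
        ∑ o, (∏ j, u j ((Equiv.piSplitAt i β).symm (o, r) j)) * g ((Equiv.piSplitAt i β).symm (o, r))
          = (∑ o, u i o) * ((∏ j : {j // j ≠ i}, u j (r j)) * g ((Equiv.piSplitAt i β).symm (o₀, r))) := by
      intro u
      rw [Finset.sum_mul]
      apply Finset.sum_congr rfl
      intro o _
      rw [prod_glue, hgc o]; ring
    rw [expand w, expand w', h1, h1']
    have hsubeq : (∏ j : {j // j ≠ i}, w j (r j)) = ∏ j : {j // j ≠ i}, w' j (r j) := by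
      apply Finset.prod_congr rfl
      intro j _
      rw [hww' j j.2]
    rw [hsubeq]

end S7d


/-- Proof template for uniform pricing: if for every valuation
profile, bidder `i`, and finitely supported distribution over no-overbidding bid
profiles there is a deviation `c ∈ S` with
`E[uᵢ(c, b₋ᵢ)] ≥ λ·vᵢ(xᵢ^v) - μ·E[∑_{j ≤ xᵢ^v} β_j(b₋ᵢ)]`, then the Bayesian Price
of Anarchy of the Uniform Price Auction is at most `(μ + 1) / λ`. -/
theorem stmt7
    (n k : ℕ) (hk : 1 ≤ k)
    (lam mu : ℝ) (hlam : 0 < lam) (hmu : 0 ≤ mu)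
    -- finite type spaces and the product prior
    (T : Fin n → Type) [∀ i, Fintype (T i)]
    (pr : ∀ i, T i → ℝ)
    (hpr0 : ∀ i t, 0 ≤ pr i t) (hpr1 : ∀ i, ∑ t, pr i t = 1)
    -- the (private) valuations
    (val : ∀ i, T i → ℕ → ℝ)
    (hval : ∀ i t, IsValuation k (val i t))
    -- the bidding format: standard or uniform
    (S : Set (Bid k))
    (hS : S = {b : Bid k | StdBid b} ∨ S = {b : Bid k | UnifBid b})
    -- the allocation rule
    (X : (Fin n → Bid k) → Fin n → ℕ)
    (hX : ∀ b, ValidAlloc b (X b))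
    -- a welfare-optimal allocation for each valuation profile
    (xopt : (∀ j, T j) → Fin n → ℕ)
    (hxoptk : ∀ θ, (∑ i, xopt θ i) = k)
    (hxoptmax : ∀ θ (y : Fin n → ℕ), (∑ i, y i) = k →
      SW (fun i => val i (θ i)) y ≤ SW (fun i => val i (θ i)) (xopt θ))
    -- the template hypothesis: for every valuation profile, every bidder `i` and every
    -- finitely supported distribution over no-overbidding profiles from the strategy
    -- spaces, there is a no-overbidding deviation `c ∈ S` with
    -- `E[uᵢ(c, b₋ᵢ)] ≥ λ·vᵢ(xᵢ^v) - μ·E[∑_{j=1}^{xᵢ^v} β_j(b₋ᵢ)]`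
    (hT : ∀ (θ : (∀ j, T j)) (i : Fin n) (P : Type) [Fintype P] (q : P → ℝ),
      (∀ ω, 0 ≤ q ω) → (∑ ω, q ω) = 1 →
      ∀ bo : P → Fin n → Bid k,
        (∀ ω, 0 < q ω → ∀ j, j ≠ i →
          bo ω j ∈ S ∧ ∃ t : T j, NoOverbid (val j t) (bo ω j)) →
        ∃ c ∈ S, NoOverbid (val i (θ i)) c ∧
          lam * val i (θ i) (xopt θ i)
              - mu * ∑ ω, q ω * betaSum k (othersBids (bo ω) i) (xopt θ i)
            ≤ ∑ ω, q ω * uUnif X (val i (θ i)) i (Function.update (bo ω) i c))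
    -- the mixed strategies: finitely supported distributions over bid vectors in `S`
    (O : Fin n → Type) [∀ i, Fintype (O i)]
    (wt : ∀ i, T i → O i → ℝ)
    (hwt0 : ∀ i t ω, 0 ≤ wt i t ω) (hwt1 : ∀ i t, ∑ ω, wt i t ω = 1)
    (B : ∀ i, T i → O i → Bid k)
    (hBS : ∀ i t ω, 0 < wt i t ω → B i t ω ∈ S)
    -- every bid vector in the support of every equilibrium strategy does not overbid
    (hBno : ∀ i t ω, 0 < wt i t ω → NoOverbid (val i t) (B i t ω))
    -- `B` is a (mixed) Bayes-Nash equilibrium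
    (hBNE : ∀ (i : Fin n) (ti : T i), ∀ c ∈ S,
      (∑ θ : (∀ j, T j), ∑ ω : (∀ j, O j),
        ((∏ j, pr j (θ j)) * ∏ j, wt j (Function.update θ i ti j) (ω j)) *
          uUnif X (val i ti) i
            (Function.update (fun j => B j (Function.update θ i ti j) (ω j)) i c))
      ≤ ∑ θ : (∀ j, T j), ∑ ω : (∀ j, O j),
        ((∏ j, pr j (θ j)) * ∏ j, wt j (Function.update θ i ti j) (ω j)) *
          uUnif X (val i ti) i (fun j => B j (Function.update θ i ti j) (ω j))) :
    (∑ θ : (∀ j, T j), (∏ j, pr j (θ j)) * SW (fun i => val i (θ i)) (xopt θ))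
      ≤ ((mu + 1) / lam) *
        ∑ θ : (∀ j, T j), ∑ ω : (∀ j, O j),
          ((∏ j, pr j (θ j)) * ∏ j, wt j (θ j) (ω j)) *
            SW (fun i => val i (θ i)) (X (fun j => B j (θ j) (ω j))) := by
  classical
  -- nonnegativity of bids in S
  have hSnn : ∀ b ∈ S, ∀ j : Fin k, 0 ≤ b j := by
    rcases hS with rfl | rfl
    · intro b hb j; exact hb.2 j
    · intro b hb j
      obtain ⟨c, hc, q, hq, hbj⟩ := hb
      rw [hbj j]
      split <;> simp [hc]
  have hp0 : ∀ θ : ∀ j, T j, 0 ≤ ∏ j, pr j (θ j) :=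
    fun θ => Finset.prod_nonneg (fun j _ => hpr0 j (θ j))
  have hw0 : ∀ (σ : ∀ j, T j) (ω : ∀ j, O j), 0 ≤ ∏ j, wt j (σ j) (ω j) :=
    fun σ ω => Finset.prod_nonneg (fun j _ => hwt0 j (σ j) (ω j))
  have hp1 : ∑ θ : ∀ j, T j, ∏ j, pr j (θ j) = 1 := S7d.sumPi_one pr hpr1
  -- positive product implies positive factors
  have hposfac : ∀ (τ : ∀ j, T j) (ω : ∀ j, O j), 0 < ∏ j, wt j (τ j) (ω j) →
      ∀ j, 0 < wt j (τ j) (ω j) := by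
    intro τ ω hpos j
    rcases lt_or_eq_of_le (hwt0 j (τ j) (ω j)) with h | h
    · exact h
    · exfalso
      have : ∏ j, wt j (τ j) (ω j) = 0 :=
        Finset.prod_eq_zero (Finset.mem_univ j) h.symm
      rw [this] at hpos; exact lt_irrefl _ hpos
  -- support bid profiles are nonneg and no-overbidding
  have hsupp : ∀ (τ : ∀ j, T j) (ω : ∀ j, O j), 0 < ∏ j, wt j (τ j) (ω j) →
      (∀ i' (j : Fin k), 0 ≤ B i' (τ i') (ω i') j) ∧
      (∀ i', NoOverbid (val i' (τ i')) (B i' (τ i') (ω i'))) := by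
    intro τ ω hpos
    constructor
    · intro i' j
      exact hSnn _ (hBS i' (τ i') (ω i') (hposfac τ ω hpos i')) j
    · intro i'
      exact hBno i' (τ i') (ω i') (hposfac τ ω hpos i')
  -- Step 1: the deviation from the template hypothesis
  have hdev : ∀ (θ : ∀ j, T j) (i : Fin n), ∃ c, c ∈ S ∧ NoOverbid (val i (θ i)) c ∧
      lam * val i (θ i) (xopt θ i)
        - mu * ∑ σ : ∀ j, T j, ∑ ω : ∀ j, O j,
            ((∏ j, pr j (σ j)) * ∏ j, wt j (Function.update σ i (θ i) j) (ω j)) *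
              betaSum k (othersBids (fun j => B j (Function.update σ i (θ i) j) (ω j)) i)
                (xopt θ i)
      ≤ ∑ σ : ∀ j, T j, ∑ ω : ∀ j, O j,
          ((∏ j, pr j (σ j)) * ∏ j, wt j (Function.update σ i (θ i) j) (ω j)) *
            uUnif X (val i (θ i)) i
              (Function.update (fun j => B j (Function.update σ i (θ i) j) (ω j)) i c) := by
    intro θ i
    set q : ((∀ j, T j) × (∀ j, O j)) → ℝ :=
      fun z => (∏ j, pr j (z.1 j)) * ∏ j, wt j (Function.update z.1 i (θ i) j) (z.2 j) with hqdef
    have hq0 : ∀ z, 0 ≤ q z := by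
      intro z
      exact mul_nonneg (hp0 z.1) (Finset.prod_nonneg (fun j _ => hwt0 _ _ _))
    have hq1 : ∑ z, q z = 1 := by
      rw [Fintype.sum_prod_type]
      have : ∀ σ : ∀ j, T j, ∑ ω : ∀ j, O j,
          (∏ j, pr j (σ j)) * ∏ j, wt j (Function.update σ i (θ i) j) (ω j)
            = (∏ j, pr j (σ j)) := by
        intro σ
        rw [← Finset.mul_sum,
          S7d.sumPi_one (fun j => wt j (Function.update σ i (θ i) j))
            (fun j => hwt1 j _), mul_one]
      rw [Finset.sum_congr rfl (fun σ _ => this σ), hp1]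
    obtain ⟨c, hcS, hcNo, hineq⟩ := hT θ i ((∀ j, T j) × (∀ j, O j)) q hq0 hq1
      (fun z => fun j => B j (Function.update z.1 i (θ i) j) (z.2 j))
      (by
        intro z hz j _
        have hwpos : 0 < ∏ j, wt j (Function.update z.1 i (θ i) j) (z.2 j) := by
          rcases lt_or_eq_of_le (Finset.prod_nonneg
            (fun j _ => hwt0 j (Function.update z.1 i (θ i) j) (z.2 j))) with h | h
          · exact h
          · exfalso
            rw [hqdef] at hz
            simp only [← h, mul_zero] at hz
            exact lt_irrefl _ hz
        have hfj := hposfac (Function.update z.1 i (θ i)) z.2 hwpos j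
        exact ⟨hBS j _ (z.2 j) hfj, ⟨Function.update z.1 i (θ i) j, hBno j _ (z.2 j) hfj⟩⟩)
    refine ⟨c, hcS, hcNo, ?_⟩
    simpa only [Fintype.sum_prod_type, hqdef] using hineq
  choose cc hccS hccNo hccIneq using fun θ => fun i => hdev θ i
  -- Step 2: Bayes-Nash dominance
  have hstep2 : ∀ (θ : ∀ j, T j) (i : Fin n),
      lam * val i (θ i) (xopt θ i)
        - mu * ∑ σ : ∀ j, T j, ∑ ω : ∀ j, O j,
            ((∏ j, pr j (σ j)) * ∏ j, wt j (Function.update σ i (θ i) j) (ω j)) *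
              betaSum k (othersBids (fun j => B j (Function.update σ i (θ i) j) (ω j)) i)
                (xopt θ i)
      ≤ ∑ σ : ∀ j, T j, ∑ ω : ∀ j, O j,
          ((∏ j, pr j (σ j)) * ∏ j, wt j (Function.update σ i (θ i) j) (ω j)) *
            uUnif X (val i (θ i)) i (fun j => B j (Function.update σ i (θ i) j) (ω j)) := by
    intro θ i
    exact le_trans (hccIneq θ i) (hBNE i (θ i) (cc θ i) (hccS θ i))
  -- add othersBids congruence uses
  -- Step 3: resample the beta term to equilibrium types
  have hD : ∀ (θ : ∀ j, T j) (i : Fin n),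
      (∑ σ : ∀ j, T j, ∑ ω : ∀ j, O j,
          ((∏ j, pr j (σ j)) * ∏ j, wt j (Function.update σ i (θ i) j) (ω j)) *
            betaSum k (othersBids (fun j => B j (Function.update σ i (θ i) j) (ω j)) i)
              (xopt θ i))
      = ∑ σ : ∀ j, T j, ∑ ω : ∀ j, O j,
          ((∏ j, pr j (σ j)) * ∏ j, wt j (σ j) (ω j)) *
            betaSum k (othersBids (fun j => B j (σ j) (ω j)) i) (xopt θ i) := by
    intro θ i
    apply Finset.sum_congr rfl
    intro σ _
    have hob : ∀ ω : ∀ j, O j,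
        othersBids (fun j => B j (Function.update σ i (θ i) j) (ω j)) i
          = othersBids (fun j => B j (σ j) (ω j)) i := by
      intro ω
      apply S7c.othersBids_congr
      intro j hj
      rw [Function.update_of_ne hj]
    have step1 : (∑ ω : ∀ j, O j,
        ((∏ j, pr j (σ j)) * ∏ j, wt j (Function.update σ i (θ i) j) (ω j)) *
          betaSum k (othersBids (fun j => B j (Function.update σ i (θ i) j) (ω j)) i)
            (xopt θ i))
        = (∏ j, pr j (σ j)) * ∑ ω : ∀ j, O j,
            (∏ j, wt j (Function.update σ i (θ i) j) (ω j)) *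
              betaSum k (othersBids (fun j => B j (σ j) (ω j)) i) (xopt θ i) := by
      rw [Finset.mul_sum]
      apply Finset.sum_congr rfl
      intro ω _
      rw [hob ω]; ring
    have step2 : (∑ ω : ∀ j, O j,
        ((∏ j, pr j (σ j)) * ∏ j, wt j (σ j) (ω j)) *
          betaSum k (othersBids (fun j => B j (σ j) (ω j)) i) (xopt θ i))
        = (∏ j, pr j (σ j)) * ∑ ω : ∀ j, O j,
            (∏ j, wt j (σ j) (ω j)) *
              betaSum k (othersBids (fun j => B j (σ j) (ω j)) i) (xopt θ i) := by
      rw [Finset.mul_sum]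
      apply Finset.sum_congr rfl
      intro ω _
      ring
    rw [step1, step2]
    congr 1
    apply S7d.oswap (w := fun j => wt j (Function.update σ i (θ i) j))
      (w' := fun j => wt j (σ j)) i
    · intro j hj
      rw [Function.update_of_ne hj]
    · rw [Function.update_self]; exact hwt1 i (θ i)
    · exact hwt1 i (σ i)
    · intro ω o
      congr 1
      apply S7c.othersBids_congr
      intro j hj
      rw [Function.update_of_ne hj]
  have hstep3 : ∀ (θ : ∀ j, T j) (i : Fin n),
      lam * val i (θ i) (xopt θ i)
        ≤ mu * (∑ σ : ∀ j, T j, ∑ ω : ∀ j, O j,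
              ((∏ j, pr j (σ j)) * ∏ j, wt j (σ j) (ω j)) *
                betaSum k (othersBids (fun j => B j (σ j) (ω j)) i) (xopt θ i))
          + ∑ σ : ∀ j, T j, ∑ ω : ∀ j, O j,
              ((∏ j, pr j (σ j)) * ∏ j, wt j (Function.update σ i (θ i) j) (ω j)) *
                uUnif X (val i (θ i)) i (fun j => B j (Function.update σ i (θ i) j) (ω j)) := by
    intro θ i
    have h := hstep2 θ i
    rw [hD θ i] at h
    linarith
  -- Step 4: Fubini for the utility term
  have hR : ∀ i : Fin n,
      (∑ θ : ∀ j, T j, (∏ j, pr j (θ j)) *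
        ∑ σ : ∀ j, T j, ∑ ω : ∀ j, O j,
          ((∏ j, pr j (σ j)) * ∏ j, wt j (Function.update σ i (θ i) j) (ω j)) *
            uUnif X (val i (θ i)) i (fun j => B j (Function.update σ i (θ i) j) (ω j)))
      = ∑ σ : ∀ j, T j, ∑ ω : ∀ j, O j,
          ((∏ j, pr j (σ j)) * ∏ j, wt j (σ j) (ω j)) *
            uUnif X (val i (σ i)) i (fun j => B j (σ j) (ω j)) := by
    intro i
    set Ψ : (∀ j, T j) → ℝ := fun τ =>
      ∑ ω : ∀ j, O j, (∏ j, wt j (τ j) (ω j)) *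
        uUnif X (val i (τ i)) i (fun j => B j (τ j) (ω j)) with hΨdef
    have hΨ : ∀ (σ : ∀ j, T j) (ti : T i),
        (∑ ω : ∀ j, O j,
          ((∏ j, pr j (σ j)) * ∏ j, wt j (Function.update σ i ti j) (ω j)) *
            uUnif X (val i ti) i (fun j => B j (Function.update σ i ti j) (ω j)))
          = (∏ j, pr j (σ j)) * Ψ (Function.update σ i ti) := by
      intro σ ti
      rw [hΨdef]
      simp only [Function.update_self]
      rw [Finset.mul_sum]
      apply Finset.sum_congr rfl
      intro ω _
      ring
    have e1 : (∑ θ : ∀ j, T j, (∏ j, pr j (θ j)) *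
        ∑ σ : ∀ j, T j, ∑ ω : ∀ j, O j,
          ((∏ j, pr j (σ j)) * ∏ j, wt j (Function.update σ i (θ i) j) (ω j)) *
            uUnif X (val i (θ i)) i (fun j => B j (Function.update σ i (θ i) j) (ω j)))
        = ∑ θ : ∀ j, T j, (∏ j, pr j (θ j)) *
            ∑ σ : ∀ j, T j, (∏ j, pr j (σ j)) * Ψ (Function.update σ i (θ i)) := by
      apply Finset.sum_congr rfl
      intro θ _
      congr 1
      apply Finset.sum_congr rfl
      intro σ _
      exact hΨ σ (θ i)
    rw [e1]
    have e2 := S7d.margin pr hpr1 i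
      (fun ti => ∑ σ : ∀ j, T j, (∏ j, pr j (σ j)) * Ψ (Function.update σ i ti))
    rw [e2]
    rw [S7d.resample pr hpr1 i Ψ]
    rw [hΨdef]
    apply Finset.sum_congr rfl
    intro σ _
    rw [Finset.mul_sum]
    apply Finset.sum_congr rfl
    intro ω _
    ring
  -- realized welfare expectation
  set E : ℝ := ∑ θ : (∀ j, T j), ∑ ω : (∀ j, O j),
      ((∏ j, pr j (θ j)) * ∏ j, wt j (θ j) (ω j)) *
        SW (fun i => val i (θ i)) (X (fun j => B j (θ j) (ω j))) with hEdef
  -- bound on the total utility term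
  have hTermR : (∑ i : Fin n, ∑ σ : ∀ j, T j, ∑ ω : ∀ j, O j,
      ((∏ j, pr j (σ j)) * ∏ j, wt j (σ j) (ω j)) *
        uUnif X (val i (σ i)) i (fun j => B j (σ j) (ω j))) ≤ E := by
    rw [hEdef, Finset.sum_comm]
    apply Finset.sum_le_sum
    intro σ _
    rw [Finset.sum_comm]
    apply Finset.sum_le_sum
    intro ω _
    have key : ∀ g : Fin n → ℝ,
        (∀ i, 0 < ∏ j, wt j (σ j) (ω j) → g i ≤ val i (σ i) (X (fun j => B j (σ j) (ω j)) i)) →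
        (∑ i, ((∏ j, pr j (σ j)) * ∏ j, wt j (σ j) (ω j)) * g i)
          ≤ ((∏ j, pr j (σ j)) * ∏ j, wt j (σ j) (ω j)) *
              SW (fun i => val i (σ i)) (X (fun j => B j (σ j) (ω j))) := by
      intro g hg
      rw [← Finset.mul_sum]
      rcases lt_or_eq_of_le (hw0 σ ω) with hpos | hzero
      · apply mul_le_mul_of_nonneg_left _ (mul_nonneg (hp0 σ) (hw0 σ ω))
        exact Finset.sum_le_sum (fun i _ => hg i hpos)
      · rw [← hzero, mul_zero, zero_mul, zero_mul]
    apply key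
    intro i hpos
    unfold uUnif
    have hpr : 0 ≤ price (fun j => B j (σ j) (ω j)) :=
      S7c.price_nonneg (hsupp σ ω hpos).1
    have : 0 ≤ (X (fun j => B j (σ j) (ω j)) i : ℝ) * price (fun j => B j (σ j) (ω j)) :=
      mul_nonneg (Nat.cast_nonneg _) hpr
    linarith
  -- bound on the total beta term
  have hTermD : (∑ θ : ∀ j, T j, (∏ j, pr j (θ j)) *
      ∑ i : Fin n, ∑ σ : ∀ j, T j, ∑ ω : ∀ j, O j,
        ((∏ j, pr j (σ j)) * ∏ j, wt j (σ j) (ω j)) *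
          betaSum k (othersBids (fun j => B j (σ j) (ω j)) i) (xopt θ i)) ≤ E := by
    have inner : ∀ θ : ∀ j, T j,
        (∑ i : Fin n, ∑ σ : ∀ j, T j, ∑ ω : ∀ j, O j,
          ((∏ j, pr j (σ j)) * ∏ j, wt j (σ j) (ω j)) *
            betaSum k (othersBids (fun j => B j (σ j) (ω j)) i) (xopt θ i)) ≤ E := by
      intro θ
      rw [hEdef, Finset.sum_comm]
      apply Finset.sum_le_sum
      intro σ _
      rw [Finset.sum_comm]
      apply Finset.sum_le_sum
      intro ω _
      rw [← Finset.mul_sum]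
      rcases lt_or_eq_of_le (hw0 σ ω) with hpos | hzero
      · apply mul_le_mul_of_nonneg_left _ (mul_nonneg (hp0 σ) (hw0 σ ω))
        exact S7c.chainMain (fun j => B j (σ j) (ω j)) (X (fun j => B j (σ j) (ω j)))
          (xopt θ) (fun i' => val i' (σ i')) (hsupp σ ω hpos).1
          (hX (fun j => B j (σ j) (ω j))) (fun i' => hval i' (σ i'))
          (hsupp σ ω hpos).2 (hxoptk θ)
      · rw [← hzero, mul_zero, zero_mul, zero_mul]
    calc (∑ θ : ∀ j, T j, (∏ j, pr j (θ j)) *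
        ∑ i : Fin n, ∑ σ : ∀ j, T j, ∑ ω : ∀ j, O j,
          ((∏ j, pr j (σ j)) * ∏ j, wt j (σ j) (ω j)) *
            betaSum k (othersBids (fun j => B j (σ j) (ω j)) i) (xopt θ i))
        ≤ ∑ θ : ∀ j, T j, (∏ j, pr j (θ j)) * E := by
          apply Finset.sum_le_sum
          intro θ _
          exact mul_le_mul_of_nonneg_left (inner θ) (hp0 θ)
      _ = E := by rw [← Finset.sum_mul, hp1, one_mul]
  -- main inequality
  have main : lam * (∑ θ : (∀ j, T j), (∏ j, pr j (θ j)) * SW (fun i => val i (θ i)) (xopt θ))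
      ≤ mu * E + E := by
    have expand : lam * (∑ θ : (∀ j, T j), (∏ j, pr j (θ j)) * SW (fun i => val i (θ i)) (xopt θ))
        = ∑ θ : (∀ j, T j), ∑ i : Fin n, (∏ j, pr j (θ j)) * (lam * val i (θ i) (xopt θ i)) := by
      rw [Finset.mul_sum]
      apply Finset.sum_congr rfl
      intro θ _
      unfold SW
      rw [Finset.mul_sum, Finset.mul_sum]
      apply Finset.sum_congr rfl
      intro i _
      ring
    rw [expand]
    have bound : ∀ (θ : ∀ j, T j) (i : Fin n),
        (∏ j, pr j (θ j)) * (lam * val i (θ i) (xopt θ i))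
          ≤ (∏ j, pr j (θ j)) * (mu * (∑ σ : ∀ j, T j, ∑ ω : ∀ j, O j,
              ((∏ j, pr j (σ j)) * ∏ j, wt j (σ j) (ω j)) *
                betaSum k (othersBids (fun j => B j (σ j) (ω j)) i) (xopt θ i))
            + ∑ σ : ∀ j, T j, ∑ ω : ∀ j, O j,
              ((∏ j, pr j (σ j)) * ∏ j, wt j (Function.update σ i (θ i) j) (ω j)) *
                uUnif X (val i (θ i)) i (fun j => B j (Function.update σ i (θ i) j) (ω j))) :=
      fun θ i => mul_le_mul_of_nonneg_left (hstep3 θ i) (hp0 θ)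
    calc (∑ θ : (∀ j, T j), ∑ i : Fin n, (∏ j, pr j (θ j)) * (lam * val i (θ i) (xopt θ i)))
        ≤ ∑ θ : (∀ j, T j), ∑ i : Fin n, (∏ j, pr j (θ j)) * (mu * (∑ σ : ∀ j, T j, ∑ ω : ∀ j, O j,
              ((∏ j, pr j (σ j)) * ∏ j, wt j (σ j) (ω j)) *
                betaSum k (othersBids (fun j => B j (σ j) (ω j)) i) (xopt θ i))
            + ∑ σ : ∀ j, T j, ∑ ω : ∀ j, O j,
              ((∏ j, pr j (σ j)) * ∏ j, wt j (Function.update σ i (θ i) j) (ω j)) *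
                uUnif X (val i (θ i)) i (fun j => B j (Function.update σ i (θ i) j) (ω j))) := by
          apply Finset.sum_le_sum
          intro θ _
          exact Finset.sum_le_sum (fun i _ => bound θ i)
      _ = mu * (∑ θ : ∀ j, T j, (∏ j, pr j (θ j)) *
            ∑ i : Fin n, ∑ σ : ∀ j, T j, ∑ ω : ∀ j, O j,
              ((∏ j, pr j (σ j)) * ∏ j, wt j (σ j) (ω j)) *
                betaSum k (othersBids (fun j => B j (σ j) (ω j)) i) (xopt θ i))
          + ∑ i : Fin n, ∑ θ : ∀ j, T j, (∏ j, pr j (θ j)) *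
              ∑ σ : ∀ j, T j, ∑ ω : ∀ j, O j,
                ((∏ j, pr j (σ j)) * ∏ j, wt j (Function.update σ i (θ i) j) (ω j)) *
                  uUnif X (val i (θ i)) i (fun j => B j (Function.update σ i (θ i) j) (ω j)) := by
          have reassoc : ∀ (p' : (∀ j, T j) → ℝ) (D' R' : (∀ j, T j) → Fin n → ℝ),
              (∑ θ : ∀ j, T j, ∑ i : Fin n, p' θ * (mu * D' θ i + R' θ i))
              = mu * (∑ θ : ∀ j, T j, p' θ * ∑ i : Fin n, D' θ i)
                + ∑ i : Fin n, ∑ θ : ∀ j, T j, p' θ * R' θ i := by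
            intro p' D' R'
            calc (∑ θ : ∀ j, T j, ∑ i : Fin n, p' θ * (mu * D' θ i + R' θ i))
                = ∑ θ : ∀ j, T j,
                    (mu * (p' θ * ∑ i : Fin n, D' θ i) + p' θ * ∑ i : Fin n, R' θ i) := by
                  apply Finset.sum_congr rfl
                  intro θ _
                  rw [Finset.mul_sum, Finset.mul_sum, Finset.mul_sum, ← Finset.sum_add_distrib]
                  exact Finset.sum_congr rfl fun i _ => by ring
              _ = (∑ θ : ∀ j, T j, mu * (p' θ * ∑ i : Fin n, D' θ i))
                  + ∑ θ : ∀ j, T j, p' θ * ∑ i : Fin n, R' θ i := Finset.sum_add_distrib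
              _ = mu * (∑ θ : ∀ j, T j, p' θ * ∑ i : Fin n, D' θ i)
                  + ∑ i : Fin n, ∑ θ : ∀ j, T j, p' θ * R' θ i := by
                  rw [← Finset.mul_sum]
                  congr 1
                  rw [Finset.sum_congr rfl fun θ _ => Finset.mul_sum _ _ _, Finset.sum_comm]
          exact reassoc (fun θ => ∏ j, pr j (θ j))
            (fun θ i => ∑ σ : ∀ j, T j, ∑ ω : ∀ j, O j,
              ((∏ j, pr j (σ j)) * ∏ j, wt j (σ j) (ω j)) *
                betaSum k (othersBids (fun j => B j (σ j) (ω j)) i) (xopt θ i))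
            (fun θ i => ∑ σ : ∀ j, T j, ∑ ω : ∀ j, O j,
              ((∏ j, pr j (σ j)) * ∏ j, wt j (Function.update σ i (θ i) j) (ω j)) *
                uUnif X (val i (θ i)) i (fun j => B j (Function.update σ i (θ i) j) (ω j)))
      _ ≤ mu * E + E := by
          have t1 : (∑ θ : ∀ j, T j, (∏ j, pr j (θ j)) *
              ∑ i : Fin n, ∑ σ : ∀ j, T j, ∑ ω : ∀ j, O j,
                ((∏ j, pr j (σ j)) * ∏ j, wt j (σ j) (ω j)) *
                  betaSum k (othersBids (fun j => B j (σ j) (ω j)) i) (xopt θ i)) ≤ E := hTermD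
          have t2 : (∑ i : Fin n, ∑ θ : ∀ j, T j, (∏ j, pr j (θ j)) *
              ∑ σ : ∀ j, T j, ∑ ω : ∀ j, O j,
                ((∏ j, pr j (σ j)) * ∏ j, wt j (Function.update σ i (θ i) j) (ω j)) *
                  uUnif X (val i (θ i)) i (fun j => B j (Function.update σ i (θ i) j) (ω j))) ≤ E := by
            calc _ = ∑ i : Fin n, ∑ σ : ∀ j, T j, ∑ ω : ∀ j, O j,
                ((∏ j, pr j (σ j)) * ∏ j, wt j (σ j) (ω j)) *
                  uUnif X (val i (σ i)) i (fun j => B j (σ j) (ω j)) :=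
                  Finset.sum_congr rfl (fun i _ => hR i)
              _ ≤ E := hTermR
            
          have hmuE := mul_le_mul_of_nonneg_left t1 hmu
          linarith
  rw [div_mul_eq_mul_div, le_div_iff₀ hlam]
  linarith [main]



end
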